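/- Let A be a Hermitian n×n complex matrix. Then for every index j, s_j(A⁺) ≤ s_j( |A| ⊕ (|A| − A)/2 ), where the right-hand matrix is the 2n×2n block diagonal matrix with diagonal blocks |A| and (|A| − A)/2. -/

import Mathlib

open Matrix
open scoped ComplexOrder

/-- `singularValues X j` is the `(j+1)`-th largest singular value of `X`, i.e. the
decreasingly ordered square roots of the eigenvalues of `Xᴴ * X`. -/
noncomputable def singularValues {m : ℕ} (X : Matrix (Fin m) (Fin m) ℂ) : Fin m → ℝ :=
  fun j => Real.sqrt
    ((Matrix.isHermitian_conjTranspose_mul_self X).eigenvalues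
      (Tuple.sort (Matrix.isHermitian_conjTranspose_mul_self X).eigenvalues j.rev))

/-- `matAbs X = |X|` is the positive semidefinite square root of `Xᴴ * X`. -/
noncomputable def matAbs {m : ℕ} (X : Matrix (Fin m) (Fin m) ℂ) : Matrix (Fin m) (Fin m) ℂ :=
  (Matrix.posSemidef_conjTranspose_mul_self X).1.eigenvectorUnitary.1 *
    Matrix.diagonal ((↑) ∘ Real.sqrt ∘ (Matrix.posSemidef_conjTranspose_mul_self X).1.eigenvalues) *
    (star (Matrix.posSemidef_conjTranspose_mul_self X).1.eigenvectorUnitary : Matrix (Fin m) (Fin m) ℂ)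

/-- `dsum X Y = X ⊕ Y` is the block diagonal matrix with diagonal blocks `X` and `Y`. -/
noncomputable def dsum {m : ℕ} (X Y : Matrix (Fin m) (Fin m) ℂ) :
    Matrix (Fin (m + m)) (Fin (m + m)) ℂ :=
  Matrix.reindex finSumFinEquiv finSumFinEquiv (Matrix.fromBlocks X 0 0 Y)

/-- `matPosPart X = X⁺ = (|X| + X)/2`. -/
noncomputable def matPosPart {m : ℕ} (X : Matrix (Fin m) (Fin m) ℂ) : Matrix (Fin m) (Fin m) ℂ :=
  (2 : ℂ)⁻¹ • (matAbs X + X)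

/-- `matNegPart X = X⁻ = (|X| - X)/2`. -/
noncomputable def matNegPart {m : ℕ} (X : Matrix (Fin m) (Fin m) ℂ) : Matrix (Fin m) (Fin m) ℂ :=
  (2 : ℂ)⁻¹ • (matAbs X - X)

section Aux

open Polynomial

lemma charpoly_diagonal' {m : ℕ} (d : Fin m → ℂ) :
    (Matrix.diagonal d).charpoly = ∏ i, (X - C (d i)) := by
  have h : charmatrix (Matrix.diagonal d) =
      Matrix.diagonal (fun i => (X : ℂ[X]) - C (d i)) := by
    ext i k
    rcases eq_or_ne i k with rfl | h
    · simp [charmatrix_apply_eq]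
    · simp [charmatrix_apply_ne _ _ _ h, Matrix.diagonal_apply_ne _ h]
  rw [Matrix.charpoly, h, Matrix.det_diagonal]

lemma charpoly_unitary_conj {m : ℕ} (U B : Matrix (Fin m) (Fin m) ℂ)
    (h1 : U * Uᴴ = 1) (h2 : Uᴴ * U = 1) (B' : Matrix (Fin m) (Fin m) ℂ)
    (hB' : B' = U * B * Uᴴ) : B'.charpoly = B.charpoly := by
  subst hB'
  have hC : ∀ (P Q : Matrix (Fin m) (Fin m) ℂ),
      (P * Q).map (C : ℂ →+* ℂ[X]) = P.map C * Q.map C := fun P Q => Matrix.map_mul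
  have hcomm : U.map (C : ℂ →+* ℂ[X]) * (Matrix.scalar (Fin m)) (X : ℂ[X]) =
      (Matrix.scalar (Fin m)) (X : ℂ[X]) * U.map C :=
    (Matrix.scalar_commute (X : ℂ[X]) (fun r => Commute.all _ _) (U.map C)).symm
  have key : charmatrix (U * B * Uᴴ) = (U.map (C : ℂ →+* ℂ[X])) * charmatrix B * (Uᴴ.map C) := by
    rw [charmatrix, charmatrix, mul_sub, sub_mul, RingHom.mapMatrix_apply,
      RingHom.mapMatrix_apply, hC, hC]
    congr 1
    rw [hcomm, mul_assoc, ← hC, h1, Matrix.map_one C (map_zero C) (map_one C), mul_one]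
  rw [Matrix.charpoly, Matrix.charpoly, key, Matrix.det_mul, Matrix.det_mul, mul_comm,
    ← mul_assoc, ← Matrix.det_mul, ← hC, h2, Matrix.map_one C (map_zero C) (map_one C),
    Matrix.det_one, one_mul]

lemma roots_prod_lin {m : ℕ} (d : Fin m → ℂ) :
    (∏ i, ((X : ℂ[X]) - C (d i))).roots = Finset.univ.val.map d := by
  rw [Finset.prod_eq_multiset_prod]
  have : Multiset.map (fun i => (X : ℂ[X]) - C (d i)) Finset.univ.val =
      (Finset.univ.val.map d).map (fun a => (X : ℂ[X]) - C a) := by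
    rw [Multiset.map_map]; rfl
  rw [this, Polynomial.roots_multiset_prod_X_sub_C]

lemma roots_charpoly_hermitian {m : ℕ} {B : Matrix (Fin m) (Fin m) ℂ} (hB : B.IsHermitian) :
    B.charpoly.roots = Finset.univ.val.map (fun i => (hB.eigenvalues i : ℂ)) := by
  have hU1 : (hB.eigenvectorUnitary : Matrix (Fin m) (Fin m) ℂ) *
      (hB.eigenvectorUnitary : Matrix (Fin m) (Fin m) ℂ)ᴴ = 1 := by
    rw [← Matrix.star_eq_conjTranspose]
    exact Matrix.mem_unitaryGroup_iff.mp hB.eigenvectorUnitary.2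
  have hU2 : (hB.eigenvectorUnitary : Matrix (Fin m) (Fin m) ℂ)ᴴ *
      (hB.eigenvectorUnitary : Matrix (Fin m) (Fin m) ℂ) = 1 := by
    rw [← Matrix.star_eq_conjTranspose]
    exact Matrix.mem_unitaryGroup_iff'.mp hB.eigenvectorUnitary.2
  have hsp : B = (hB.eigenvectorUnitary : Matrix (Fin m) (Fin m) ℂ) *
      Matrix.diagonal (fun i => (hB.eigenvalues i : ℂ)) *
      (hB.eigenvectorUnitary : Matrix (Fin m) (Fin m) ℂ)ᴴ := by
    rw [← Matrix.star_eq_conjTranspose]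
    exact hB.spectral_theorem
  rw [charpoly_unitary_conj _ _ hU1 hU2 _ hsp, charpoly_diagonal', roots_prod_lin]

lemma eig_multiset {m : ℕ} {B : Matrix (Fin m) (Fin m) ℂ} (hB : B.IsHermitian)
    (t : Multiset ℝ) (h : B.charpoly.roots = t.map (fun x : ℝ => (x : ℂ))) :
    Finset.univ.val.map hB.eigenvalues = t := by
  have h2 : (Finset.univ.val.map hB.eigenvalues).map (fun x : ℝ => (x : ℂ)) =
      t.map (fun x : ℝ => (x : ℂ)) := by
    rw [Multiset.map_map, ← h, roots_charpoly_hermitian hB]; rfl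
  exact Multiset.map_injective (fun a b hab => by exact_mod_cast hab) h2

lemma card_eq_countP {m : ℕ} (f : Fin m → ℝ) (c : ℝ) (t : Multiset ℝ)
    (h : Finset.univ.val.map f = t) :
    Fintype.card {i // f i ≤ c} = t.countP (fun x => x ≤ c) := by
  rw [Fintype.card_subtype, ← h, Multiset.countP_map]
  rfl

lemma sorted_le_iff {m : ℕ} (f : Fin m → ℝ) (k : Fin m) (c : ℝ) :
    f (Tuple.sort f k) ≤ c ↔ (k : ℕ) < Fintype.card {i // f (Tuple.sort f i) ≤ c} :=
  by rw [Fintype.card_subtype]; exact (Tuple.lt_card_le_iff_apply_le_of_monotone (Tuple.monotone_sort f)).symm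

lemma card_sort_eq {m : ℕ} (f : Fin m → ℝ) (c : ℝ) :
    Fintype.card {i // f (Tuple.sort f i) ≤ c} = Fintype.card {i // f i ≤ c} :=
  Fintype.card_congr (Equiv.subtypeEquiv (Tuple.sort f) (fun _ => Iff.rfl))

lemma dsum_conjTranspose {m : ℕ} (X Y : Matrix (Fin m) (Fin m) ℂ) :
    (dsum X Y)ᴴ = dsum Xᴴ Yᴴ := by
  simp [dsum, Matrix.reindex_apply, Matrix.conjTranspose_submatrix,
    Matrix.fromBlocks_conjTranspose]

lemma dsum_mul {m : ℕ} (X Y Z W : Matrix (Fin m) (Fin m) ℂ) :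
    dsum X Y * dsum Z W = dsum (X * Z) (Y * W) := by
  simp [dsum, Matrix.reindex_apply, Matrix.submatrix_mul_equiv,
    Matrix.fromBlocks_multiply]

lemma charpoly_dsum {m : ℕ} (X Y : Matrix (Fin m) (Fin m) ℂ) :
    (dsum X Y).charpoly = X.charpoly * Y.charpoly := by
  rw [dsum, Matrix.charpoly_reindex, Matrix.charpoly_fromBlocks_zero₁₂]

end Aux

/-- Let `A` be a Hermitian `n×n` complex matrix. Then for every index `j`,
`s_j(A⁺) ≤ s_j(|A| ⊕ (|A| - A)/2)`. -/
theorem stmt_9 {n : ℕ} (A : Matrix (Fin n) (Fin n) ℂ) (hA : A.IsHermitian) (j : Fin n) :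
    singularValues (matPosPart A) j ≤
      singularValues (dsum (matAbs A) ((2 : ℂ)⁻¹ • (matAbs A - A))) (Fin.castAdd n j) := by
  classical
  set U : Matrix (Fin n) (Fin n) ℂ := (hA.eigenvectorUnitary : Matrix (Fin n) (Fin n) ℂ) with hUdef
  have hU1 : U * Uᴴ = 1 := by
    rw [hUdef, ← Matrix.star_eq_conjTranspose]
    exact Matrix.mem_unitaryGroup_iff.mp hA.eigenvectorUnitary.2
  have hU2 : Uᴴ * U = 1 := by
    rw [hUdef, ← Matrix.star_eq_conjTranspose]
    exact Matrix.mem_unitaryGroup_iff'.mp hA.eigenvectorUnitary.2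
  set lam : Fin n → ℝ := hA.eigenvalues with hlam
  set conj : (Fin n → ℝ) → Matrix (Fin n) (Fin n) ℂ :=
    fun μ => U * Matrix.diagonal (fun i => (μ i : ℂ)) * Uᴴ with hconjdef
  -- algebra of conj
  have key : ∀ D E : Matrix (Fin n) (Fin n) ℂ, (U * D * Uᴴ) * (U * E * Uᴴ) = U * (D * E) * Uᴴ := by
    intro D E
    rw [Matrix.mul_assoc (U * D) Uᴴ, ← Matrix.mul_assoc Uᴴ (U * E) Uᴴ,
      ← Matrix.mul_assoc Uᴴ U E, hU2, Matrix.one_mul, ← Matrix.mul_assoc,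
      Matrix.mul_assoc U D E]
  have hmul : ∀ μ ν, conj μ * conj ν = conj (fun i => μ i * ν i) := by
    intro μ ν
    show (U * _ * Uᴴ) * (U * _ * Uᴴ) = U * _ * Uᴴ
    rw [key, Matrix.diagonal_mul_diagonal]
    congr 2
    funext i
    push_cast
    ring
  have hadd : ∀ μ ν, conj μ + conj ν = conj (fun i => μ i + ν i) := by
    intro μ ν
    simp only [hconjdef]
    rw [← Matrix.add_mul, ← Matrix.mul_add, Matrix.diagonal_add]
    congr 2
    funext i
    push_cast
    ring
  have hsub : ∀ μ ν, conj μ - conj ν = conj (fun i => μ i - ν i) := by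
    intro μ ν
    simp only [hconjdef]
    rw [← Matrix.sub_mul, ← Matrix.mul_sub, Matrix.diagonal_sub]
    congr 2
    funext i
    push_cast
    ring
  have hsmul : ∀ μ, (2 : ℂ)⁻¹ • conj μ = conj (fun i => 2⁻¹ * μ i) := by
    intro μ
    have hD : (2 : ℂ)⁻¹ • (Matrix.diagonal fun i => ((μ i : ℝ) : ℂ)) =
        Matrix.diagonal fun i => ((2⁻¹ * μ i : ℝ) : ℂ) := by
      ext i k
      rcases eq_or_ne i k with rfl | h
      · simp [Matrix.diagonal_apply_eq, Complex.ofReal_mul]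
      · simp [Matrix.diagonal_apply_ne _ h]
    show (2 : ℂ)⁻¹ • (U * _ * Uᴴ) = U * _ * Uᴴ
    rw [← smul_mul_assoc, ← mul_smul_comm, hD]
  have hherm : ∀ μ, (conj μ).IsHermitian := by
    intro μ
    have hD : (Matrix.diagonal fun i => ((μ i : ℝ) : ℂ))ᴴ =
        Matrix.diagonal fun i => ((μ i : ℝ) : ℂ) := by
      simp [Matrix.diagonal_conjTranspose, Pi.star_def, Complex.conj_ofReal]
    show (U * _ * Uᴴ)ᴴ = U * _ * Uᴴ
    rw [Matrix.conjTranspose_mul, Matrix.conjTranspose_mul,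
      Matrix.conjTranspose_conjTranspose, hD, Matrix.mul_assoc]
  have hpsd : ∀ μ : Fin n → ℝ, (∀ i, 0 ≤ μ i) → (conj μ).PosSemidef := by
    intro μ hμ
    exact (Matrix.PosSemidef.diagonal (fun i => by
      simpa using Complex.zero_le_real.mpr (hμ i))).mul_mul_conjTranspose_same U
  have hAeq : A = conj lam := by
    simp only [hconjdef]
    rw [← Matrix.star_eq_conjTranspose]
    exact hA.spectral_theorem
  -- eigenvalue multiset of conj forms
  have hconj_eig : ∀ (μ : Fin n → ℝ) (B : Matrix (Fin n) (Fin n) ℂ) (hB : B.IsHermitian),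
      B = conj μ → Finset.univ.val.map hB.eigenvalues = Finset.univ.val.map μ := by
    intro μ B hB hBe
    apply eig_multiset hB
    rw [charpoly_unitary_conj U _ hU1 hU2 B hBe, charpoly_diagonal', roots_prod_lin,
      Multiset.map_map]
    rfl
  -- abs, pos part, neg part
  have habs : matAbs A = conj (fun i => |lam i|) := by
    have hsq : (conj fun i => |lam i|) ^ 2 = Aᴴ * A := by
      rw [hA.eq, pow_two, hmul]
      conv_rhs => rw [hAeq]
      rw [hmul]
      have : (fun i => |lam i| * |lam i|) = fun i => lam i * lam i :=
        funext fun i => abs_mul_abs_self _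
      rw [this]
    have e : matAbs A = cfc Real.sqrt (Aᴴ * A) := by
      rw [(Matrix.posSemidef_conjTranspose_mul_self A).1.cfc_eq]; rfl
    open scoped MatrixOrder in
    (rw [e, ← cfcₙ_eq_cfc (hf0 := Real.sqrt_zero), ← CFC.sqrt_eq_real_sqrt _
        (Matrix.nonneg_iff_posSemidef.mpr (Matrix.posSemidef_conjTranspose_mul_self A))]
     exact CFC.sqrt_unique (by rw [← pow_two]; exact hsq)
        (Matrix.nonneg_iff_posSemidef.mpr (hpsd _ (fun i => abs_nonneg _))))
  have hppart : matPosPart A = conj (fun i => 2⁻¹ * (|lam i| + lam i)) := by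
    rw [matPosPart, habs]
    conv_lhs => rw [hAeq]
    rw [hadd, hsmul]
  have hnpart : (2 : ℂ)⁻¹ • (matAbs A - A) = conj (fun i => 2⁻¹ * (|lam i| - lam i)) := by
    rw [habs]
    conv_lhs => rw [hAeq]
    rw [hsub, hsmul]
  set p : Fin n → ℝ := fun i => 2⁻¹ * (|lam i| + lam i) with hp
  set a : Fin n → ℝ := fun i => |lam i| with ha
  set q : Fin n → ℝ := fun i => 2⁻¹ * (|lam i| - lam i) with hq
  set M : Matrix (Fin (n + n)) (Fin (n + n)) ℂ :=
    dsum (matAbs A) ((2 : ℂ)⁻¹ • (matAbs A - A)) with hM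
  -- eigenvalue multisets
  have hFeq : (matPosPart A)ᴴ * matPosPart A = conj (fun i => p i * p i) := by
    rw [hppart, (hherm p).eq, hmul]
  have hFmult : Finset.univ.val.map
      ((Matrix.isHermitian_conjTranspose_mul_self (matPosPart A)).eigenvalues) =
      Finset.univ.val.map (fun i => p i * p i) :=
    hconj_eig _ _ _ hFeq
  have hMeq : Mᴴ * M = dsum (conj fun i => a i * a i) (conj fun i => q i * q i) := by
    rw [hM, dsum_conjTranspose, dsum_mul, hnpart, habs, (hherm a).eq, (hherm q).eq,
      hmul, hmul]
  have hGmult : Finset.univ.val.map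
      ((Matrix.isHermitian_conjTranspose_mul_self M).eigenvalues) =
      Finset.univ.val.map (fun i => a i * a i) + Finset.univ.val.map (fun i => q i * q i) := by
    apply eig_multiset
    have hne : (conj fun i => a i * a i).charpoly * (conj fun i => q i * q i).charpoly ≠ 0 :=
      ((Matrix.charpoly_monic _).mul (Matrix.charpoly_monic _)).ne_zero
    rw [hMeq, charpoly_dsum, Polynomial.roots_mul hne,
      charpoly_unitary_conj U _ hU1 hU2 _ rfl, charpoly_unitary_conj U _ hU1 hU2 _ rfl,
      charpoly_diagonal', charpoly_diagonal', roots_prod_lin, roots_prod_lin,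
      Multiset.map_add, Multiset.map_map, Multiset.map_map]
    rfl
  -- counting
  simp only [singularValues]
  set F : Fin n → ℝ := (Matrix.isHermitian_conjTranspose_mul_self (matPosPart A)).eigenvalues with hF
  set G : Fin (n + n) → ℝ := (Matrix.isHermitian_conjTranspose_mul_self M).eigenvalues with hG
  apply Real.sqrt_le_sqrt
  set c : ℝ := G (Tuple.sort G (Fin.castAdd n j).rev) with hc
  have h1 : ((Fin.castAdd n j).rev : ℕ) < Fintype.card {i // G (Tuple.sort G i) ≤ c} :=
    (sorted_le_iff G _ c).mp le_rfl
  rw [card_sort_eq] at h1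
  have h2 : Fintype.card {i // G i ≤ c} =
      (Finset.univ.val.map (fun i => a i * a i)).countP (fun x => x ≤ c) +
      (Finset.univ.val.map (fun i => q i * q i)).countP (fun x => x ≤ c) := by
    rw [card_eq_countP G c _ hGmult, Multiset.countP_add]
  have h3 : (Finset.univ.val.map (fun i => q i * q i)).countP (fun x => x ≤ c) ≤ n := by
    have := Multiset.countP_le_card (fun x => x ≤ c) (Finset.univ.val.map fun i => q i * q i)
    simpa using this
  have h4 : (Finset.univ.val.map (fun i => a i * a i)).countP (fun x => x ≤ c) =
      Fintype.card {i // a i * a i ≤ c} := (card_eq_countP _ c _ rfl).symm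
  have h5 : Fintype.card {i // a i * a i ≤ c} ≤ Fintype.card {i // p i * p i ≤ c} := by
    apply Fintype.card_subtype_mono
    intro i hi
    refine le_trans ?_ hi
    simp only [hp, ha]
    nlinarith [le_abs_self (lam i), neg_abs_le (lam i), abs_nonneg (lam i)]
  have h6 : Fintype.card {i // p i * p i ≤ c} = Fintype.card {i // F i ≤ c} := by
    rw [card_eq_countP F c _ hFmult, card_eq_countP (fun i => p i * p i) c _ rfl]
  have h7 : ((j.rev : Fin n) : ℕ) < Fintype.card {i // F (Tuple.sort F i) ≤ c} := by
    rw [card_sort_eq]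
    have hj := j.isLt
    have hrev1 : ((j.rev : Fin n) : ℕ) = n - (j + 1) := Fin.val_rev j
    have hrev2 : (((Fin.castAdd n j).rev : Fin (n + n)) : ℕ) = (n + n) - ((j : ℕ) + 1) := by
      rw [Fin.val_rev, Fin.coe_castAdd]
    omega
  exact (sorted_le_iff F j.rev c).mpr h7
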